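/- Let H be a Hilbert space, V a closed subspace, L : H → ℝ^m continuous linear, ε > 0, y ∈ ℝ^m, and f̂ a minimizer of ‖f − P_V f‖ subject to L(f) = y, with ‖f̂ − P_V f̂‖ ≤ ε. Then for every f with L(f) = y and ‖f − P_V f‖ ≤ ε, the element u = f − f̂ ∈ ker(L) satisfies ‖u − P_V u‖ ≤ √(ε² − ‖f̂ − P_V f̂‖²). -/

import Mathlib

theorem stmt_5 {H : Type*} [NormedAddCommGroup H] [InnerProductSpace ℝ H]
    {m : ℕ} (V : Submodule ℝ H) [CompleteSpace V]
    (L : H →L[ℝ] EuclideanSpace ℝ (Fin m)) (ε : ℝ) (hε : 0 < ε)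
    (y : EuclideanSpace ℝ (Fin m)) (fhat : H) (hdata : L fhat = y)
    (hmin : ∀ f : H, L f = y →
      ‖fhat - (Submodule.orthogonalProjectionOnto V fhat : H)‖ ≤ ‖f - (Submodule.orthogonalProjectionOnto V f : H)‖)
    (hmodel : ‖fhat - (Submodule.orthogonalProjectionOnto V fhat : H)‖ ≤ ε) :
    ∀ f : H, L f = y → ‖f - (Submodule.orthogonalProjectionOnto V f : H)‖ ≤ ε →
      (f - fhat) ∈ LinearMap.ker (L : H →ₗ[ℝ] EuclideanSpace ℝ (Fin m)) ∧
      ‖(f - fhat) - (Submodule.orthogonalProjectionOnto V (f - fhat) : H)‖ ≤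
        Real.sqrt (ε ^ 2 - ‖fhat - (Submodule.orthogonalProjectionOnto V fhat : H)‖ ^ 2) := by
  intro f hf hfε
  have hLu : L (f - fhat) = 0 := by simp [map_sub, hf, hdata]
  refine ⟨by simpa [LinearMap.mem_ker] using hLu, ?_⟩
  set a : H := fhat - (Submodule.orthogonalProjectionOnto V fhat : H) with ha
  set b : H := (f - fhat) - (Submodule.orthogonalProjectionOnto V (f - fhat) : H) with hb
  set c : ℝ := inner ℝ a b with hc
  have key : ∀ t : ℝ, ‖a‖ ≤ ‖a + t • b‖ := by
    intro t
    have hfeas : L (fhat + t • (f - fhat)) = y := by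
      simp [map_add, map_smul, hLu, hdata]
    have h := hmin _ hfeas
    have heq : fhat + t • (f - fhat) -
        (Submodule.orthogonalProjectionOnto V (fhat + t • (f - fhat)) : H) = a + t • b := by
      rw [map_add, map_smul]
      push_cast
      rw [ha, hb]
      module
    rwa [heq] at h
  have key2 : ∀ t : ℝ, 0 ≤ 2 * t * c + t ^ 2 * ‖b‖ ^ 2 := by
    intro t
    have h := key t
    have h2 : ‖a‖ ^ 2 ≤ ‖a + t • b‖ ^ 2 := pow_le_pow_left₀ (norm_nonneg a) h 2
    have h3 : ‖a + t • b‖ ^ 2 = ‖a‖ ^ 2 + 2 * (t * c) + t ^ 2 * ‖b‖ ^ 2 := by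
      rw [← real_inner_self_eq_norm_sq, ← real_inner_self_eq_norm_sq,
        ← real_inner_self_eq_norm_sq]
      simp only [inner_add_add_self, inner_smul_left, inner_smul_right, real_inner_comm a b, ← hc, conj_trivial]
      ring
    nlinarith
  have hc0 : c = 0 := by
    have h1 := key2 (-c / (‖b‖ ^ 2 + 1))
    have hbpos : (0:ℝ) < ‖b‖ ^ 2 + 1 := by positivity
    have h2 : 0 ≤ (‖b‖ ^ 2 + 1) ^ 2 *
        (2 * (-c / (‖b‖ ^ 2 + 1)) * c + (-c / (‖b‖ ^ 2 + 1)) ^ 2 * ‖b‖ ^ 2) :=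
      mul_nonneg (sq_nonneg _) h1
    have h3 : (‖b‖ ^ 2 + 1) ^ 2 *
        (2 * (-c / (‖b‖ ^ 2 + 1)) * c + (-c / (‖b‖ ^ 2 + 1)) ^ 2 * ‖b‖ ^ 2) =
        -(c ^ 2 * (‖b‖ ^ 2 + 2)) := by
      field_simp
      ring
    rw [h3] at h2
    nlinarith [sq_nonneg c, sq_nonneg ‖b‖]
  have hfab : f - (Submodule.orthogonalProjectionOnto V f : H) = a + b := by
    have : (Submodule.orthogonalProjectionOnto V f : H) =
        (Submodule.orthogonalProjectionOnto V fhat : H) + (Submodule.orthogonalProjectionOnto V (f - fhat) : H) := by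
      have := map_sub (Submodule.orthogonalProjectionOnto V) f fhat
      push_cast [this]
      abel
    rw [this, ha, hb]; abel
  have hsum : ‖a + b‖ ^ 2 = ‖a‖ ^ 2 + ‖b‖ ^ 2 := by
    rw [← real_inner_self_eq_norm_sq, ← real_inner_self_eq_norm_sq,
      ← real_inner_self_eq_norm_sq]
    simp only [inner_add_add_self, real_inner_comm a b, ← hc, hc0]; ring
  have hle : ‖f - (Submodule.orthogonalProjectionOnto V f : H)‖ ^ 2 ≤ ε ^ 2 := by
    have := norm_nonneg (f - (Submodule.orthogonalProjectionOnto V f : H))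
    nlinarith
  have hb2 : ‖b‖ ^ 2 ≤ ε ^ 2 - ‖a‖ ^ 2 := by
    rw [hfab, hsum] at hle; linarith
  calc ‖b‖ = Real.sqrt (‖b‖ ^ 2) := by rw [Real.sqrt_sq (norm_nonneg b)]
    _ ≤ Real.sqrt (ε ^ 2 - ‖a‖ ^ 2) := Real.sqrt_le_sqrt hb2
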